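/- (Key step of Theorem 2.) If W : ℝ^k → ℝ is convex on the compact convex set 𝒳 = {A b : b ∈ Δ(S)} and bounded on 𝒳, then the function χ ↦ (H̃W)(χ) is convex on 𝒳: for all χ₁, χ₂ ∈ 𝒳 and θ ∈ [0,1], (H̃W)(θχ₁ + (1−θ)χ₂) ≤ θ·(H̃W)(χ₁) + (1−θ)·(H̃W)(χ₂). -/

import Mathlib

open Finset Matrix

section POSG

variable {S A1 A2 O : Type*} [Fintype S] [Fintype A1] [Fintype A2] [Fintype O]

/-- Expected immediate reward `E_{b,π₁,π₂}[R]`. -/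
def expReward (R : S → A1 → A2 → ℝ) (b : S → ℝ) (π1 : A1 → ℝ) (π2 : S → A2 → ℝ) : ℝ :=
  ∑ s, ∑ a1, ∑ a2, b s * π1 a1 * π2 s a2 * R s a1 a2

/-- `Pr_{b,π₁,π₂}[a₁,o]`, the probability that player 1 plays `a1` and observes `o`. -/
def prObs (T : O → S → S → A1 → A2 → ℝ) (b : S → ℝ) (π1 : A1 → ℝ) (π2 : S → A2 → ℝ)
    (a1 : A1) (o : O) : ℝ :=
  π1 a1 * ∑ s, ∑ a2, ∑ s', b s * π2 s a2 * T o s' s a1 a2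

/-- Bayesian belief update `τ(b,a₁,π₂,o)`. -/
noncomputable def beliefUpd (T : O → S → S → A1 → A2 → ℝ) (b : S → ℝ) (π2 : S → A2 → ℝ)
    (a1 : A1) (o : O) : S → ℝ := fun s' =>
  (∑ s, ∑ a2, b s * π2 s a2 * T o s' s a1 a2) /
    (∑ s'', ∑ s, ∑ a2, b s * π2 s a2 * T o s'' s a1 a2)

/-- Value of the stage game under stage strategies `π₁, π₂` with continuation values `V`. -/
noncomputable def stageVal (T : O → S → S → A1 → A2 → ℝ) (R : S → A1 → A2 → ℝ) (γ : ℝ)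
    (V : (S → ℝ) → ℝ) (b : S → ℝ) (π1 : A1 → ℝ) (π2 : S → A2 → ℝ) : ℝ :=
  expReward R b π1 π2 + γ * ∑ a1, ∑ o,
    if 0 < prObs T b π1 π2 a1 o then
      prObs T b π1 π2 a1 o * V (beliefUpd T b π2 a1 o)
    else 0

/-- The exact Bellman (stage-game) operator `H` over beliefs. -/
noncomputable def Hop (T : O → S → S → A1 → A2 → ℝ) (R : S → A1 → A2 → ℝ) (γ : ℝ)
    (V : (S → ℝ) → ℝ) (b : S → ℝ) : ℝ :=
  ⨅ π2 : {π2 : S → A2 → ℝ // ∀ s, π2 s ∈ stdSimplex ℝ A2},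
    ⨆ π1 : {π1 : A1 → ℝ // π1 ∈ stdSimplex ℝ A1},
      stageVal T R γ V b π1.1 π2.1

/-- The abstract stage-game operator `H̃` over characteristic vectors. -/
noncomputable def Habs {k : ℕ} (T : O → S → S → A1 → A2 → ℝ) (R : S → A1 → A2 → ℝ) (γ : ℝ)
    (A : Matrix (Fin k) S ℝ) (W : (Fin k → ℝ) → ℝ) (χ : Fin k → ℝ) : ℝ :=
  ⨅ b : {b : S → ℝ // b ∈ stdSimplex ℝ S ∧ A.mulVec b = χ},
    ⨅ π2 : {π2 : S → A2 → ℝ // ∀ s, π2 s ∈ stdSimplex ℝ A2},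
      ⨆ π1 : {π1 : A1 → ℝ // π1 ∈ stdSimplex ℝ A1},
        stageVal T R γ (fun b' => W (A.mulVec b')) b.1 π1.1 π2.1

end POSG

set_option linter.unusedSectionVars false
set_option linter.unusedVariables false

section POSGAux

variable {S A1 A2 O : Type*} [Fintype S] [Fintype A1] [Fintype A2] [Fintype O]

-- auxiliary defs
def upNum (T : O → S → S → A1 → A2 → ℝ) (b : S → ℝ) (π2 : S → A2 → ℝ)
    (a1 : A1) (o : O) (s' : S) : ℝ :=
  ∑ s, ∑ a2, b s * π2 s a2 * T o s' s a1 a2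

def upDen (T : O → S → S → A1 → A2 → ℝ) (b : S → ℝ) (π2 : S → A2 → ℝ)
    (a1 : A1) (o : O) : ℝ :=
  ∑ s'', upNum T b π2 a1 o s''

lemma beliefUpd_eq (T : O → S → S → A1 → A2 → ℝ) (b : S → ℝ) (π2 : S → A2 → ℝ)
    (a1 : A1) (o : O) :
    beliefUpd T b π2 a1 o = fun s' => upNum T b π2 a1 o s' / upDen T b π2 a1 o := rfl

lemma prObs_eq (T : O → S → S → A1 → A2 → ℝ) (b : S → ℝ) (π1 : A1 → ℝ) (π2 : S → A2 → ℝ)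
    (a1 : A1) (o : O) :
    prObs T b π1 π2 a1 o = π1 a1 * upDen T b π2 a1 o := by
  unfold prObs upDen upNum
  congr 1
  calc ∑ s, ∑ a2, ∑ s', b s * π2 s a2 * T o s' s a1 a2
      = ∑ s, ∑ s', ∑ a2, b s * π2 s a2 * T o s' s a1 a2 :=
        Finset.sum_congr rfl fun s _ => Finset.sum_comm
    _ = ∑ s', ∑ s, ∑ a2, b s * π2 s a2 * T o s' s a1 a2 := Finset.sum_comm

lemma upNum_nonneg {T : O → S → S → A1 → A2 → ℝ} {b : S → ℝ} {π2 : S → A2 → ℝ}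
    (hT : ∀ o s' s a1 a2, 0 ≤ T o s' s a1 a2) (hb : ∀ s, 0 ≤ b s)
    (hπ2 : ∀ s a2, 0 ≤ π2 s a2) (a1 : A1) (o : O) (s' : S) :
    0 ≤ upNum T b π2 a1 o s' := by
  refine Finset.sum_nonneg fun s _ => Finset.sum_nonneg fun a2 _ => ?_
  exact mul_nonneg (mul_nonneg (hb s) (hπ2 s a2)) (hT o s' s a1 a2)

lemma upDen_nonneg {T : O → S → S → A1 → A2 → ℝ} {b : S → ℝ} {π2 : S → A2 → ℝ}
    (hT : ∀ o s' s a1 a2, 0 ≤ T o s' s a1 a2) (hb : ∀ s, 0 ≤ b s)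
    (hπ2 : ∀ s a2, 0 ≤ π2 s a2) (a1 : A1) (o : O) :
    0 ≤ upDen T b π2 a1 o :=
  Finset.sum_nonneg fun s' _ => upNum_nonneg hT hb hπ2 a1 o s'

lemma beliefUpd_mem {T : O → S → S → A1 → A2 → ℝ} {b : S → ℝ} {π2 : S → A2 → ℝ}
    (hT : ∀ o s' s a1 a2, 0 ≤ T o s' s a1 a2) (hb : ∀ s, 0 ≤ b s)
    (hπ2 : ∀ s a2, 0 ≤ π2 s a2) {a1 : A1} {o : O}
    (hden : 0 < upDen T b π2 a1 o) :
    beliefUpd T b π2 a1 o ∈ stdSimplex ℝ S := by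
  rw [beliefUpd_eq]
  constructor
  · intro s'
    exact div_nonneg (upNum_nonneg hT hb hπ2 a1 o s') hden.le
  · rw [← Finset.sum_div]
    exact div_self hden.ne'

lemma sum_prObs_eq_one {T : O → S → S → A1 → A2 → ℝ} {b : S → ℝ} {π1 : A1 → ℝ}
    {π2 : S → A2 → ℝ}
    (hTsum : ∀ s a1 a2, ∑ o, ∑ s', T o s' s a1 a2 = 1)
    (hb : b ∈ stdSimplex ℝ S) (hπ1 : π1 ∈ stdSimplex ℝ A1)
    (hπ2 : ∀ s, π2 s ∈ stdSimplex ℝ A2) :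
    ∑ a1, ∑ o, prObs T b π1 π2 a1 o = 1 := by
  have key : ∀ a1, ∑ o, ∑ s, ∑ a2, ∑ s', b s * π2 s a2 * T o s' s a1 a2 = 1 := by
    intro a1
    calc ∑ o, ∑ s, ∑ a2, ∑ s', b s * π2 s a2 * T o s' s a1 a2
        = ∑ s, ∑ o, ∑ a2, ∑ s', b s * π2 s a2 * T o s' s a1 a2 := Finset.sum_comm
      _ = ∑ s, ∑ a2, ∑ o, ∑ s', b s * π2 s a2 * T o s' s a1 a2 :=
          Finset.sum_congr rfl fun s _ => Finset.sum_comm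
      _ = ∑ s, ∑ a2, b s * π2 s a2 * ∑ o, ∑ s', T o s' s a1 a2 := by
          simp only [Finset.mul_sum]
      _ = ∑ s, b s := by
          simp only [hTsum, mul_one, ← Finset.mul_sum]
          exact Finset.sum_congr rfl fun s _ => by rw [(hπ2 s).2, mul_one]
      _ = 1 := hb.2
  have step : ∀ a1, ∑ o, prObs T b π1 π2 a1 o = π1 a1 := by
    intro a1
    unfold prObs
    rw [← Finset.mul_sum, key a1, mul_one]
  rw [Finset.sum_congr rfl fun a1 _ => step a1]
  exact hπ1.2

end POSGAux

section POSGAux2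

variable {S A1 A2 O : Type*} [Fintype S] [Fintype A1] [Fintype A2] [Fintype O]

section POSG2

variable {S A1 A2 O : Type*} [Fintype S] [Fintype A1] [Fintype A2] [Fintype O]

lemma prObs_nonneg {T : O → S → S → A1 → A2 → ℝ} {b : S → ℝ} {π1 : A1 → ℝ} {π2 : S → A2 → ℝ}
    (hT : ∀ o s' s a1 a2, 0 ≤ T o s' s a1 a2) (hb : ∀ s, 0 ≤ b s)
    (hπ1 : ∀ a1, 0 ≤ π1 a1) (hπ2 : ∀ s a2, 0 ≤ π2 s a2) (a1 : A1) (o : O) :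
    0 ≤ prObs T b π1 π2 a1 o := by
  rw [prObs_eq]
  exact mul_nonneg (hπ1 a1) (upDen_nonneg hT hb hπ2 a1 o)

lemma abs_expReward_le {R : S → A1 → A2 → ℝ} {b : S → ℝ} {π1 : A1 → ℝ} {π2 : S → A2 → ℝ}
    {C0 : ℝ} (hR : ∀ s a1 a2, |R s a1 a2| ≤ C0)
    (hb : b ∈ stdSimplex ℝ S) (hπ1 : π1 ∈ stdSimplex ℝ A1)
    (hπ2 : ∀ s, π2 s ∈ stdSimplex ℝ A2) :
    |expReward R b π1 π2| ≤ C0 := by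
  have key : |expReward R b π1 π2| ≤ ∑ s, ∑ a1, ∑ a2, b s * π1 a1 * π2 s a2 * C0 := by
    refine (Finset.abs_sum_le_sum_abs _ _).trans ?_
    refine Finset.sum_le_sum fun s _ => ?_
    refine (Finset.abs_sum_le_sum_abs _ _).trans ?_
    refine Finset.sum_le_sum fun a1 _ => ?_
    refine (Finset.abs_sum_le_sum_abs _ _).trans ?_
    refine Finset.sum_le_sum fun a2 _ => ?_
    rw [abs_mul]
    have hco : 0 ≤ b s * π1 a1 * π2 s a2 :=
      mul_nonneg (mul_nonneg (hb.1 s) (hπ1.1 a1)) ((hπ2 s).1 a2)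
    rw [abs_of_nonneg hco]
    exact mul_le_mul_of_nonneg_left (hR s a1 a2) hco
  refine key.trans (le_of_eq ?_)
  calc ∑ s, ∑ a1, ∑ a2, b s * π1 a1 * π2 s a2 * C0
      = ∑ s, ∑ a1, b s * π1 a1 * C0 := by
        refine Finset.sum_congr rfl fun s _ => Finset.sum_congr rfl fun a1 _ => ?_
        have : ∀ a2, b s * π1 a1 * π2 s a2 * C0 = b s * π1 a1 * C0 * π2 s a2 := fun a2 => by ring
        rw [Finset.sum_congr rfl fun a2 _ => this a2, ← Finset.mul_sum, (hπ2 s).2, mul_one]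
    _ = ∑ s, b s * C0 := by
        refine Finset.sum_congr rfl fun s _ => ?_
        have : ∀ a1, b s * π1 a1 * C0 = b s * C0 * π1 a1 := fun a1 => by ring
        rw [Finset.sum_congr rfl fun a1 _ => this a1, ← Finset.mul_sum, hπ1.2, mul_one]
    _ = C0 := by
        have : ∀ s, b s * C0 = C0 * b s := fun s => by ring
        rw [Finset.sum_congr rfl fun s _ => this s, ← Finset.mul_sum, hb.2, mul_one]

lemma abs_stageVal_le {T : O → S → S → A1 → A2 → ℝ} {R : S → A1 → A2 → ℝ} {γ : ℝ}
    {V : (S → ℝ) → ℝ} {b : S → ℝ} {π1 : A1 → ℝ} {π2 : S → A2 → ℝ} {C0 C : ℝ}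
    (hT : ∀ o s' s a1 a2, 0 ≤ T o s' s a1 a2)
    (hTsum : ∀ s a1 a2, ∑ o, ∑ s', T o s' s a1 a2 = 1)
    (hγ0 : 0 ≤ γ) (hC : 0 ≤ C)
    (hR : ∀ s a1 a2, |R s a1 a2| ≤ C0)
    (hV : ∀ b' ∈ stdSimplex ℝ S, |V b'| ≤ C)
    (hb : b ∈ stdSimplex ℝ S) (hπ1 : π1 ∈ stdSimplex ℝ A1)
    (hπ2 : ∀ s, π2 s ∈ stdSimplex ℝ A2) :
    |stageVal T R γ V b π1 π2| ≤ C0 + γ * C := by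
  have hcont : |∑ a1, ∑ o, if 0 < prObs T b π1 π2 a1 o then
      prObs T b π1 π2 a1 o * V (beliefUpd T b π2 a1 o) else 0| ≤ C := by
    have tb : ∀ a1 o, |if 0 < prObs T b π1 π2 a1 o then
        prObs T b π1 π2 a1 o * V (beliefUpd T b π2 a1 o) else 0|
        ≤ prObs T b π1 π2 a1 o * C := by
      intro a1 o
      by_cases h : 0 < prObs T b π1 π2 a1 o
      · rw [if_pos h, abs_mul, abs_of_pos h]
        refine mul_le_mul_of_nonneg_left (hV _ ?_) h.le
        have hden : 0 < upDen T b π2 a1 o := by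
          rw [prObs_eq] at h
          exact (mul_pos_iff.mp h).elim (fun h => h.2) fun h => absurd h.2
            (not_lt.mpr (upDen_nonneg hT hb.1 (fun s => (hπ2 s).1) a1 o))
        exact beliefUpd_mem hT hb.1 (fun s => (hπ2 s).1) hden
      · rw [if_neg h, abs_zero]
        exact mul_nonneg (prObs_nonneg hT hb.1 hπ1.1 (fun s => (hπ2 s).1) a1 o) hC
    calc |∑ a1, ∑ o, if 0 < prObs T b π1 π2 a1 o then
        prObs T b π1 π2 a1 o * V (beliefUpd T b π2 a1 o) else 0|
        ≤ ∑ a1, ∑ o, |if 0 < prObs T b π1 π2 a1 o then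
            prObs T b π1 π2 a1 o * V (beliefUpd T b π2 a1 o) else 0| := by
          refine (Finset.abs_sum_le_sum_abs _ _).trans (Finset.sum_le_sum fun a1 _ =>
            Finset.abs_sum_le_sum_abs _ _)
      _ ≤ ∑ a1, ∑ o, prObs T b π1 π2 a1 o * C :=
          Finset.sum_le_sum fun a1 _ => Finset.sum_le_sum fun o _ => tb a1 o
      _ = C := by
          have : ∀ a1, ∑ o, prObs T b π1 π2 a1 o * C = (∑ o, prObs T b π1 π2 a1 o) * C :=
            fun a1 => (Finset.sum_mul _ _ _).symm
          rw [Finset.sum_congr rfl fun a1 _ => this a1, ← Finset.sum_mul,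
            sum_prObs_eq_one hTsum hb hπ1 hπ2, one_mul]
  calc |stageVal T R γ V b π1 π2|
      ≤ |expReward R b π1 π2| + |γ * ∑ a1, ∑ o, if 0 < prObs T b π1 π2 a1 o then
          prObs T b π1 π2 a1 o * V (beliefUpd T b π2 a1 o) else 0| := abs_add_le _ _
    _ ≤ C0 + γ * C := by
        refine add_le_add (abs_expReward_le hR hb hπ1 hπ2) ?_
        rw [abs_mul, abs_of_nonneg hγ0]
        exact mul_le_mul_of_nonneg_left hcont hγ0

end POSG2

section POSG3

variable {S A1 A2 O : Type*} [Fintype S] [Fintype A1] [Fintype A2] [Fintype O]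

lemma pos_pos_of_mul_pos_of_nonneg {a b : ℝ} (h : 0 < a * b) (hb : 0 ≤ b) :
    0 < a ∧ 0 < b :=
  (mul_pos_iff.mp h).elim id fun h' => absurd h'.2 (not_lt.mpr hb)

lemma mul_ifpos_eq_zero {t p w : ℝ} (h : t * p = 0) :
    t * (if 0 < p then p * w else 0) = 0 := by
  by_cases hp : 0 < p
  · rw [if_pos hp]
    rcases mul_eq_zero.mp h with h' | h'
    · rw [h', zero_mul]
    · exact absurd h' hp.ne'
  · rw [if_neg hp, mul_zero]

noncomputable def mixPolicy (b1 b2 : S → ℝ) (π21 π22 : S → A2 → ℝ) (θ : ℝ) : S → A2 → ℝ :=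
  fun s a2 => if θ * b1 s + (1 - θ) * b2 s = 0 then π21 s a2
    else (θ * b1 s * π21 s a2 + (1 - θ) * b2 s * π22 s a2) / (θ * b1 s + (1 - θ) * b2 s)

def mixBelief (b1 b2 : S → ℝ) (θ : ℝ) : S → ℝ := fun s => θ * b1 s + (1 - θ) * b2 s

variable {b1 b2 : S → ℝ} {π21 π22 : S → A2 → ℝ} {θ : ℝ}

lemma mix_identity (hb1 : ∀ s, 0 ≤ b1 s) (hb2 : ∀ s, 0 ≤ b2 s)
    (hθ0 : 0 ≤ θ) (hθ1 : θ ≤ 1) (s : S) (a2 : A2) :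
    mixBelief b1 b2 θ s * mixPolicy b1 b2 π21 π22 θ s a2 =
      θ * (b1 s * π21 s a2) + (1 - θ) * (b2 s * π22 s a2) := by
  have hA : 0 ≤ θ * b1 s := mul_nonneg hθ0 (hb1 s)
  have hB : 0 ≤ (1 - θ) * b2 s := mul_nonneg (by linarith) (hb2 s)
  by_cases h : θ * b1 s + (1 - θ) * b2 s = 0
  · have h1 : θ * b1 s = 0 := by linarith
    have h2 : (1 - θ) * b2 s = 0 := by linarith
    show (θ * b1 s + (1 - θ) * b2 s) * mixPolicy b1 b2 π21 π22 θ s a2 = _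
    rw [h, zero_mul]
    linear_combination (-(π21 s a2)) * h1 - π22 s a2 * h2
  · simp only [mixBelief, mixPolicy, if_neg h]
    field_simp

lemma mixPolicy_mem (hb1 : ∀ s, 0 ≤ b1 s) (hb2 : ∀ s, 0 ≤ b2 s)
    (hπ21 : ∀ s, π21 s ∈ stdSimplex ℝ A2) (hπ22 : ∀ s, π22 s ∈ stdSimplex ℝ A2)
    (hθ0 : 0 ≤ θ) (hθ1 : θ ≤ 1) (s : S) :
    mixPolicy b1 b2 π21 π22 θ s ∈ stdSimplex ℝ A2 := by
  have hA : 0 ≤ θ * b1 s := mul_nonneg hθ0 (hb1 s)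
  have hB : 0 ≤ (1 - θ) * b2 s := mul_nonneg (by linarith) (hb2 s)
  by_cases h : θ * b1 s + (1 - θ) * b2 s = 0
  · have heq : mixPolicy b1 b2 π21 π22 θ s = π21 s := funext fun a2 => if_pos h
    rw [heq]; exact hπ21 s
  · constructor
    · intro a2
      simp only [mixPolicy, if_neg h]
      refine div_nonneg ?_ (by linarith)
      exact add_nonneg (mul_nonneg hA ((hπ21 s).1 a2)) (mul_nonneg hB ((hπ22 s).1 a2))
    · simp only [mixPolicy, if_neg h]
      rw [← Finset.sum_div, Finset.sum_add_distrib, ← Finset.mul_sum, ← Finset.mul_sum,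
        (hπ21 s).2, (hπ22 s).2, mul_one, mul_one]
      exact div_self h

variable {R : S → A1 → A2 → ℝ} {T : O → S → S → A1 → A2 → ℝ} {π1 : A1 → ℝ}

lemma expReward_mix (hb1 : ∀ s, 0 ≤ b1 s) (hb2 : ∀ s, 0 ≤ b2 s)
    (hθ0 : 0 ≤ θ) (hθ1 : θ ≤ 1) :
    expReward R (mixBelief b1 b2 θ) π1 (mixPolicy b1 b2 π21 π22 θ) =
      θ * expReward R b1 π1 π21 + (1 - θ) * expReward R b2 π1 π22 := by
  unfold expReward
  rw [Finset.mul_sum, Finset.mul_sum, ← Finset.sum_add_distrib]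
  refine Finset.sum_congr rfl fun s _ => ?_
  rw [Finset.mul_sum, Finset.mul_sum, ← Finset.sum_add_distrib]
  refine Finset.sum_congr rfl fun a1 _ => ?_
  rw [Finset.mul_sum, Finset.mul_sum, ← Finset.sum_add_distrib]
  refine Finset.sum_congr rfl fun a2 _ => ?_
  linear_combination (π1 a1 * R s a1 a2) * mix_identity (π21 := π21) (π22 := π22) hb1 hb2 hθ0 hθ1 s a2

lemma upNum_mix (hb1 : ∀ s, 0 ≤ b1 s) (hb2 : ∀ s, 0 ≤ b2 s)
    (hθ0 : 0 ≤ θ) (hθ1 : θ ≤ 1) (a1 : A1) (o : O) (s' : S) :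
    upNum T (mixBelief b1 b2 θ) (mixPolicy b1 b2 π21 π22 θ) a1 o s' =
      θ * upNum T b1 π21 a1 o s' + (1 - θ) * upNum T b2 π22 a1 o s' := by
  unfold upNum
  rw [Finset.mul_sum, Finset.mul_sum, ← Finset.sum_add_distrib]
  refine Finset.sum_congr rfl fun s _ => ?_
  rw [Finset.mul_sum, Finset.mul_sum, ← Finset.sum_add_distrib]
  refine Finset.sum_congr rfl fun a2 _ => ?_
  linear_combination T o s' s a1 a2 * mix_identity (π21 := π21) (π22 := π22) hb1 hb2 hθ0 hθ1 s a2

lemma upDen_mix (hb1 : ∀ s, 0 ≤ b1 s) (hb2 : ∀ s, 0 ≤ b2 s)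
    (hθ0 : 0 ≤ θ) (hθ1 : θ ≤ 1) (a1 : A1) (o : O) :
    upDen T (mixBelief b1 b2 θ) (mixPolicy b1 b2 π21 π22 θ) a1 o =
      θ * upDen T b1 π21 a1 o + (1 - θ) * upDen T b2 π22 a1 o := by
  unfold upDen
  rw [Finset.mul_sum, Finset.mul_sum, ← Finset.sum_add_distrib]
  exact Finset.sum_congr rfl fun s' _ => upNum_mix hb1 hb2 hθ0 hθ1 a1 o s'

end POSG3

section POSG4

variable {S A1 A2 O : Type*} [Fintype S] [Fintype A1] [Fintype A2] [Fintype O] {k : ℕ}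
variable {b1 b2 : S → ℝ} {π21 π22 : S → A2 → ℝ} {θ : ℝ}
variable {R : S → A1 → A2 → ℝ} {T : O → S → S → A1 → A2 → ℝ} {π1 : A1 → ℝ} {γ : ℝ}

lemma prObs_mix (hb1 : ∀ s, 0 ≤ b1 s) (hb2 : ∀ s, 0 ≤ b2 s)
    (hθ0 : 0 ≤ θ) (hθ1 : θ ≤ 1) (a1 : A1) (o : O) :
    prObs T (mixBelief b1 b2 θ) π1 (mixPolicy b1 b2 π21 π22 θ) a1 o =
      θ * prObs T b1 π1 π21 a1 o + (1 - θ) * prObs T b2 π1 π22 a1 o := by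
  rw [prObs_eq, prObs_eq, prObs_eq, upDen_mix hb1 hb2 hθ0 hθ1 a1 o]
  ring

lemma stageVal_mix (A : Matrix (Fin k) S ℝ) (W : (Fin k → ℝ) → ℝ)
    (hT : ∀ o s' s a1 a2, 0 ≤ T o s' s a1 a2) (hγ0 : 0 ≤ γ)
    (hWconv : ConvexOn ℝ (A.mulVec '' stdSimplex ℝ S) W)
    (hb1 : b1 ∈ stdSimplex ℝ S) (hb2 : b2 ∈ stdSimplex ℝ S)
    (hπ21 : ∀ s, π21 s ∈ stdSimplex ℝ A2) (hπ22 : ∀ s, π22 s ∈ stdSimplex ℝ A2)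
    (hθ0 : 0 ≤ θ) (hθ1 : θ ≤ 1) (hπ1 : π1 ∈ stdSimplex ℝ A1) :
    stageVal T R γ (fun b' => W (A.mulVec b')) (mixBelief b1 b2 θ) π1
        (mixPolicy b1 b2 π21 π22 θ) ≤
      θ * stageVal T R γ (fun b' => W (A.mulVec b')) b1 π1 π21 +
        (1 - θ) * stageVal T R γ (fun b' => W (A.mulVec b')) b2 π1 π22 := by
  have hθ1' : 0 ≤ 1 - θ := by linarith
  set d : S → ℝ := mixBelief b1 b2 θ with hd_def
  set π2 : S → A2 → ℝ := mixPolicy b1 b2 π21 π22 θ with hπ2_def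
  have hdnn : ∀ s, 0 ≤ d s := fun s =>
    add_nonneg (mul_nonneg hθ0 (hb1.1 s)) (mul_nonneg hθ1' (hb2.1 s))
  have hπ2mem : ∀ s, π2 s ∈ stdSimplex ℝ A2 :=
    mixPolicy_mem hb1.1 hb2.1 hπ21 hπ22 hθ0 hθ1
  -- termwise inequality for the continuation sum
  have term : ∀ a1 o,
      (if 0 < prObs T d π1 π2 a1 o then
        prObs T d π1 π2 a1 o * W (A.mulVec (beliefUpd T d π2 a1 o)) else 0) ≤
      θ * (if 0 < prObs T b1 π1 π21 a1 o then
        prObs T b1 π1 π21 a1 o * W (A.mulVec (beliefUpd T b1 π21 a1 o)) else 0) +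
      (1 - θ) * (if 0 < prObs T b2 π1 π22 a1 o then
        prObs T b2 π1 π22 a1 o * W (A.mulVec (beliefUpd T b2 π22 a1 o)) else 0) := by
    intro a1 o
    have hp0eq : prObs T d π1 π2 a1 o = π1 a1 * upDen T d π2 a1 o := prObs_eq ..
    have hp1eq : prObs T b1 π1 π21 a1 o = π1 a1 * upDen T b1 π21 a1 o := prObs_eq ..
    have hp2eq : prObs T b2 π1 π22 a1 o = π1 a1 * upDen T b2 π22 a1 o := prObs_eq ..
    have hdenmix : upDen T d π2 a1 o =
        θ * upDen T b1 π21 a1 o + (1 - θ) * upDen T b2 π22 a1 o :=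
      upDen_mix hb1.1 hb2.1 hθ0 hθ1 a1 o
    have hden1nn : 0 ≤ upDen T b1 π21 a1 o :=
      upDen_nonneg hT hb1.1 (fun s => (hπ21 s).1) a1 o
    have hden2nn : 0 ≤ upDen T b2 π22 a1 o :=
      upDen_nonneg hT hb2.1 (fun s => (hπ22 s).1) a1 o
    have hp1nn : 0 ≤ prObs T b1 π1 π21 a1 o :=
      prObs_nonneg hT hb1.1 hπ1.1 (fun s => (hπ21 s).1) a1 o
    have hp2nn : 0 ≤ prObs T b2 π1 π22 a1 o :=
      prObs_nonneg hT hb2.1 hπ1.1 (fun s => (hπ22 s).1) a1 o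
    by_cases hP : 0 < prObs T d π1 π2 a1 o
    · obtain ⟨hπ1pos, hden0pos⟩ :=
        pos_pos_of_mul_pos_of_nonneg (hp0eq ▸ hP)
          (upDen_nonneg hT hdnn (fun s => (hπ2mem s).1) a1 o)
      rw [if_pos hP]
      by_cases h1 : 0 < θ * upDen T b1 π21 a1 o
      · obtain ⟨hθpos, hden1pos⟩ := pos_pos_of_mul_pos_of_nonneg h1 hden1nn
        by_cases h2 : 0 < (1 - θ) * upDen T b2 π22 a1 o
        · -- both parts active: use convexity of W
          obtain ⟨hθ1pos, hden2pos⟩ := pos_pos_of_mul_pos_of_nonneg h2 hden2nn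
          have hτ1mem := beliefUpd_mem hT hb1.1 (fun s => (hπ21 s).1) hden1pos
          have hτ2mem := beliefUpd_mem hT hb2.1 (fun s => (hπ22 s).1) hden2pos
          have hτeq : beliefUpd T d π2 a1 o =
              (θ * upDen T b1 π21 a1 o / upDen T d π2 a1 o) • beliefUpd T b1 π21 a1 o +
              ((1 - θ) * upDen T b2 π22 a1 o / upDen T d π2 a1 o) •
                beliefUpd T b2 π22 a1 o := by
            funext s'
            simp only [beliefUpd_eq, Pi.add_apply, Pi.smul_apply, smul_eq_mul]
            rw [upNum_mix (π21 := π21) (π22 := π22) hb1.1 hb2.1 hθ0 hθ1 a1 o s']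
            field_simp
          have hlam : 0 ≤ θ * upDen T b1 π21 a1 o / upDen T d π2 a1 o :=
            div_nonneg h1.le hden0pos.le
          have hmu : 0 ≤ (1 - θ) * upDen T b2 π22 a1 o / upDen T d π2 a1 o :=
            div_nonneg h2.le hden0pos.le
          have hsum1 : θ * upDen T b1 π21 a1 o / upDen T d π2 a1 o +
              (1 - θ) * upDen T b2 π22 a1 o / upDen T d π2 a1 o = 1 := by
            rw [← add_div, ← hdenmix]
            exact div_self hden0pos.ne'
          have hconv := hWconv.2 (Set.mem_image_of_mem _ hτ1mem)
            (Set.mem_image_of_mem _ hτ2mem) hlam hmu hsum1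
          have hAτ : A.mulVec (beliefUpd T d π2 a1 o) =
              (θ * upDen T b1 π21 a1 o / upDen T d π2 a1 o) •
                A.mulVec (beliefUpd T b1 π21 a1 o) +
              ((1 - θ) * upDen T b2 π22 a1 o / upDen T d π2 a1 o) •
                A.mulVec (beliefUpd T b2 π22 a1 o) := by
            rw [hτeq, Matrix.mulVec_add, Matrix.mulVec_smul, Matrix.mulVec_smul]
          rw [if_pos (by rw [hp1eq]; exact mul_pos hπ1pos hden1pos),
            if_pos (by rw [hp2eq]; exact mul_pos hπ1pos hden2pos)]
          calc prObs T d π1 π2 a1 o * W (A.mulVec (beliefUpd T d π2 a1 o))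
              ≤ prObs T d π1 π2 a1 o *
                  ((θ * upDen T b1 π21 a1 o / upDen T d π2 a1 o) *
                    W (A.mulVec (beliefUpd T b1 π21 a1 o)) +
                  ((1 - θ) * upDen T b2 π22 a1 o / upDen T d π2 a1 o) *
                    W (A.mulVec (beliefUpd T b2 π22 a1 o))) := by
                refine mul_le_mul_of_nonneg_left ?_ hP.le
                rw [hAτ]
                simpa [smul_eq_mul] using hconv
            _ = θ * (prObs T b1 π1 π21 a1 o * W (A.mulVec (beliefUpd T b1 π21 a1 o))) +
                (1 - θ) * (prObs T b2 π1 π22 a1 o *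
                  W (A.mulVec (beliefUpd T b2 π22 a1 o))) := by
                rw [hp0eq, hp1eq, hp2eq]
                field_simp
        · -- second part vanishes: updated belief equals τ1
          have ht2 : (1 - θ) * upDen T b2 π22 a1 o = 0 :=
            le_antisymm (not_lt.mp h2) (mul_nonneg hθ1' hden2nn)
          have hnum2 : ∀ s', (1 - θ) * upNum T b2 π22 a1 o s' = 0 := by
            intro s'
            have hsz : ∑ s'', (1 - θ) * upNum T b2 π22 a1 o s'' = 0 := by
              rw [← Finset.mul_sum]; exact ht2
            exact (Finset.sum_eq_zero_iff_of_nonneg fun s'' _ =>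
              mul_nonneg hθ1' (upNum_nonneg hT hb2.1 (fun s => (hπ22 s).1) a1 o s'')).mp
              hsz s' (Finset.mem_univ s')
          have hτeq : beliefUpd T d π2 a1 o = beliefUpd T b1 π21 a1 o := by
            funext s'
            simp only [beliefUpd_eq]
            rw [upNum_mix (π21 := π21) (π22 := π22) hb1.1 hb2.1 hθ0 hθ1 a1 o s',
              hdenmix, ht2, hnum2 s', add_zero, add_zero,
              mul_div_mul_left _ _ hθpos.ne']
          have hp2z : (1 - θ) * prObs T b2 π1 π22 a1 o = 0 := by
            rw [hp2eq]; linear_combination π1 a1 * ht2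
          have hp0val : prObs T d π1 π2 a1 o = θ * prObs T b1 π1 π21 a1 o := by
            rw [hp0eq, hp1eq, hdenmix, ht2]; ring
          have hp1pos : 0 < prObs T b1 π1 π21 a1 o := by
            rw [hp1eq]; exact mul_pos hπ1pos hden1pos
          rw [if_pos hp1pos, hτeq, hp0val, mul_ifpos_eq_zero hp2z]
          linarith [le_refl (θ * (prObs T b1 π1 π21 a1 o *
            W (A.mulVec (beliefUpd T b1 π21 a1 o))))]
      · -- first part vanishes: updated belief equals τ2
        have ht1 : θ * upDen T b1 π21 a1 o = 0 :=
          le_antisymm (not_lt.mp h1) (mul_nonneg hθ0 hden1nn)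
        have h2 : 0 < (1 - θ) * upDen T b2 π22 a1 o := by
          rw [hdenmix, ht1, zero_add] at hden0pos; exact hden0pos
        obtain ⟨hθ1pos, hden2pos⟩ := pos_pos_of_mul_pos_of_nonneg h2 hden2nn
        have hnum1 : ∀ s', θ * upNum T b1 π21 a1 o s' = 0 := by
          intro s'
          have hsz : ∑ s'', θ * upNum T b1 π21 a1 o s'' = 0 := by
            rw [← Finset.mul_sum]; exact ht1
          exact (Finset.sum_eq_zero_iff_of_nonneg fun s'' _ =>
            mul_nonneg hθ0 (upNum_nonneg hT hb1.1 (fun s => (hπ21 s).1) a1 o s'')).mp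
            hsz s' (Finset.mem_univ s')
        have hτeq : beliefUpd T d π2 a1 o = beliefUpd T b2 π22 a1 o := by
          funext s'
          simp only [beliefUpd_eq]
          rw [upNum_mix (π21 := π21) (π22 := π22) hb1.1 hb2.1 hθ0 hθ1 a1 o s',
            hdenmix, ht1, hnum1 s', zero_add, zero_add,
            mul_div_mul_left _ _ hθ1pos.ne']
        have hp1z : θ * prObs T b1 π1 π21 a1 o = 0 := by
          rw [hp1eq]; linear_combination π1 a1 * ht1
        have hp0val : prObs T d π1 π2 a1 o = (1 - θ) * prObs T b2 π1 π22 a1 o := by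
          rw [hp0eq, hp2eq, hdenmix, ht1]; ring
        have hp2pos : 0 < prObs T b2 π1 π22 a1 o := by
          rw [hp2eq]; exact mul_pos hπ1pos hden2pos
        rw [if_pos hp2pos, hτeq, hp0val, mul_ifpos_eq_zero hp1z]
        linarith [le_refl ((1 - θ) * (prObs T b2 π1 π22 a1 o *
          W (A.mulVec (beliefUpd T b2 π22 a1 o))))]
    · -- mixed probability is zero
      have hp0nn : 0 ≤ prObs T d π1 π2 a1 o :=
        prObs_nonneg hT hdnn hπ1.1 (fun s => (hπ2mem s).1) a1 o
      have hp0z : prObs T d π1 π2 a1 o = 0 := le_antisymm (not_lt.mp hP) hp0nn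
      have hmixp : prObs T d π1 π2 a1 o =
          θ * prObs T b1 π1 π21 a1 o + (1 - θ) * prObs T b2 π1 π22 a1 o :=
        prObs_mix hb1.1 hb2.1 hθ0 hθ1 a1 o
      have hA : 0 ≤ θ * prObs T b1 π1 π21 a1 o := mul_nonneg hθ0 hp1nn
      have hB : 0 ≤ (1 - θ) * prObs T b2 π1 π22 a1 o := mul_nonneg hθ1' hp2nn
      have h1z : θ * prObs T b1 π1 π21 a1 o = 0 := by linarith [hp0z ▸ hmixp]
      have h2z : (1 - θ) * prObs T b2 π1 π22 a1 o = 0 := by linarith [hp0z ▸ hmixp]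
      rw [if_neg hP, mul_ifpos_eq_zero h1z, mul_ifpos_eq_zero h2z, add_zero]
  -- assemble
  have hsum : (∑ a1, ∑ o, if 0 < prObs T d π1 π2 a1 o then
        prObs T d π1 π2 a1 o * W (A.mulVec (beliefUpd T d π2 a1 o)) else 0) ≤
      θ * (∑ a1, ∑ o, if 0 < prObs T b1 π1 π21 a1 o then
        prObs T b1 π1 π21 a1 o * W (A.mulVec (beliefUpd T b1 π21 a1 o)) else 0) +
      (1 - θ) * (∑ a1, ∑ o, if 0 < prObs T b2 π1 π22 a1 o then
        prObs T b2 π1 π22 a1 o * W (A.mulVec (beliefUpd T b2 π22 a1 o)) else 0) := by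
    rw [Finset.mul_sum, Finset.mul_sum, ← Finset.sum_add_distrib]
    refine Finset.sum_le_sum fun a1 _ => ?_
    rw [Finset.mul_sum, Finset.mul_sum, ← Finset.sum_add_distrib]
    exact Finset.sum_le_sum fun o _ => term a1 o
  unfold stageVal
  rw [expReward_mix (R := R) (π1 := π1) hb1.1 hb2.1 hθ0 hθ1]
  have := mul_le_mul_of_nonneg_left hsum hγ0
  nlinarith [this]

end POSG4

end POSGAux2


lemma exists_R_bound {S A1 A2 : Type*} [Fintype S] [Fintype A1] [Fintype A2]
    (R : S → A1 → A2 → ℝ) : ∃ C0 : ℝ, ∀ s a1 a2, |R s a1 a2| ≤ C0 := by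
  refine ⟨∑ s, ∑ a1, ∑ a2, |R s a1 a2|, fun s a1 a2 => ?_⟩
  calc |R s a1 a2| ≤ ∑ a2, |R s a1 a2| :=
        Finset.single_le_sum (f := fun a2 => |R s a1 a2|)
          (fun _ _ => abs_nonneg _) (Finset.mem_univ a2)
    _ ≤ ∑ a1, ∑ a2, |R s a1 a2| :=
        Finset.single_le_sum (f := fun a1 => ∑ a2, |R s a1 a2|)
          (fun _ _ => Finset.sum_nonneg fun _ _ => abs_nonneg _) (Finset.mem_univ a1)
    _ ≤ ∑ s, ∑ a1, ∑ a2, |R s a1 a2| :=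
        Finset.single_le_sum (f := fun s => ∑ a1, ∑ a2, |R s a1 a2|)
          (fun _ _ => Finset.sum_nonneg fun _ _ =>
            Finset.sum_nonneg fun _ _ => abs_nonneg _) (Finset.mem_univ s)

lemma real_le_of_forall_pos {a b : ℝ} (h : ∀ ε : ℝ, 0 < ε → a ≤ b + ε) : a ≤ b := by
  by_contra hc
  push_neg at hc
  have := h ((a - b) / 2) (by linarith)
  linarith

set_option maxHeartbeats 2000000 in
/-- key step of Theorem 2: if `W` is convex and bounded on
`𝒳 = {A b : b ∈ Δ(S)}`, then `H̃ W` is convex on `𝒳`. -/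
theorem habs_convexOn
    {S A1 A2 O : Type*} [Fintype S] [Fintype A1] [Fintype A2] [Fintype O]
    [Nonempty S] [Nonempty A1] [Nonempty A2] [Nonempty O] {k : ℕ}
    (T : O → S → S → A1 → A2 → ℝ) (R : S → A1 → A2 → ℝ) (γ : ℝ)
    (hT : ∀ o s' s a1 a2, 0 ≤ T o s' s a1 a2)
    (hTsum : ∀ s a1 a2, ∑ o, ∑ s', T o s' s a1 a2 = 1)
    (hγ0 : 0 ≤ γ) (hγ1 : γ < 1)
    (A : Matrix (Fin k) S ℝ)
    (W : (Fin k → ℝ) → ℝ)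
    (hWconv : ConvexOn ℝ (A.mulVec '' stdSimplex ℝ S) W)
    (hWbdd : ∃ C, ∀ χ ∈ A.mulVec '' stdSimplex ℝ S, |W χ| ≤ C) :
    ∀ χ1 ∈ A.mulVec '' stdSimplex ℝ S, ∀ χ2 ∈ A.mulVec '' stdSimplex ℝ S,
      ∀ θ : ℝ, 0 ≤ θ → θ ≤ 1 →
        Habs T R γ A W (θ • χ1 + (1 - θ) • χ2) ≤
          θ * Habs T R γ A W χ1 + (1 - θ) * Habs T R γ A W χ2 := by
  classical
  intro χ1 hχ1 χ2 hχ2 θ hθ0 hθ1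
  have hθ1' : 0 ≤ 1 - θ := by linarith
  obtain ⟨C', hC'⟩ := hWbdd
  set C : ℝ := max C' 0 with hC_def
  have hCnn : 0 ≤ C := le_max_right _ _
  have hC : ∀ χ ∈ A.mulVec '' stdSimplex ℝ S, |W χ| ≤ C := fun χ hχ =>
    (hC' χ hχ).trans (le_max_left _ _)
  obtain ⟨C0, hR⟩ := exists_R_bound R
  set M : ℝ := C0 + γ * C with hM_def
  have hVbd : ∀ b' ∈ stdSimplex ℝ S, |W (A.mulVec b')| ≤ C := fun b' hb' =>
    hC _ (Set.mem_image_of_mem _ hb')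
  have hbound : ∀ (b : S → ℝ), b ∈ stdSimplex ℝ S →
      ∀ (π2 : S → A2 → ℝ), (∀ s, π2 s ∈ stdSimplex ℝ A2) →
      ∀ (π1 : A1 → ℝ), π1 ∈ stdSimplex ℝ A1 →
      |stageVal T R γ (fun b' => W (A.mulVec b')) b π1 π2| ≤ M :=
    fun b hb π2 hπ2 π1 hπ1 =>
      abs_stageVal_le hT hTsum hγ0 hCnn hR hVbd hb hπ1 hπ2
  haveI inst1 : Nonempty {π1 : A1 → ℝ // π1 ∈ stdSimplex ℝ A1} :=
    ⟨⟨Pi.single (Classical.arbitrary A1) 1, single_mem_stdSimplex ℝ _⟩⟩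
  haveI inst2 : Nonempty {π2 : S → A2 → ℝ // ∀ s, π2 s ∈ stdSimplex ℝ A2} :=
    ⟨⟨fun _ => Pi.single (Classical.arbitrary A2) 1, fun _ => single_mem_stdSimplex ℝ _⟩⟩
  set F : (S → ℝ) → (S → A2 → ℝ) → ℝ := fun b π2 =>
    ⨆ π1 : {π1 : A1 → ℝ // π1 ∈ stdSimplex ℝ A1},
      stageVal T R γ (fun b' => W (A.mulVec b')) b π1.1 π2 with hF_def
  have hFbddAbove : ∀ (b : S → ℝ), b ∈ stdSimplex ℝ S →
      ∀ (π2 : S → A2 → ℝ), (∀ s, π2 s ∈ stdSimplex ℝ A2) →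
      BddAbove (Set.range fun π1 : {π1 : A1 → ℝ // π1 ∈ stdSimplex ℝ A1} =>
        stageVal T R γ (fun b' => W (A.mulVec b')) b π1.1 π2) := by
    intro b hb π2 hπ2
    refine ⟨M, ?_⟩
    rintro x ⟨π1, rfl⟩
    exact (abs_le.mp (hbound b hb π2 hπ2 π1.1 π1.2)).2
  have hFub : ∀ (b : S → ℝ), b ∈ stdSimplex ℝ S →
      ∀ (π2 : S → A2 → ℝ), (∀ s, π2 s ∈ stdSimplex ℝ A2) → F b π2 ≤ M :=
    fun b hb π2 hπ2 => ciSup_le fun π1 => (abs_le.mp (hbound b hb π2 hπ2 π1.1 π1.2)).2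
  have hFlb : ∀ (b : S → ℝ), b ∈ stdSimplex ℝ S →
      ∀ (π2 : S → A2 → ℝ), (∀ s, π2 s ∈ stdSimplex ℝ A2) → -M ≤ F b π2 := by
    intro b hb π2 hπ2
    obtain ⟨π1⟩ := inst1
    calc -M ≤ stageVal T R γ (fun b' => W (A.mulVec b')) b π1.1 π2 :=
          (abs_le.mp (hbound b hb π2 hπ2 π1.1 π1.2)).1
      _ ≤ F b π2 := le_ciSup (hFbddAbove b hb π2 hπ2) π1
  -- Habs as iterated infimum of F
  have hHabs : ∀ χ : Fin k → ℝ, Habs T R γ A W χ =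
      ⨅ b : {b : S → ℝ // b ∈ stdSimplex ℝ S ∧ A.mulVec b = χ},
        ⨅ π2 : {π2 : S → A2 → ℝ // ∀ s, π2 s ∈ stdSimplex ℝ A2}, F b.1 π2.1 :=
    fun χ => rfl
  -- upper bound for Habs at any feasible point
  have habs_le : ∀ (χ : Fin k → ℝ) (b : S → ℝ)
      (hb : b ∈ stdSimplex ℝ S ∧ A.mulVec b = χ)
      (π2 : S → A2 → ℝ) (hπ2 : ∀ s, π2 s ∈ stdSimplex ℝ A2),
      Habs T R γ A W χ ≤ F b π2 := by
    intro χ b hb π2 hπ2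
    haveI : Nonempty {b : S → ℝ // b ∈ stdSimplex ℝ S ∧ A.mulVec b = χ} := ⟨⟨b, hb⟩⟩
    have h1 : BddBelow (Set.range fun π2' : {π2 : S → A2 → ℝ //
        ∀ s, π2 s ∈ stdSimplex ℝ A2} => F b π2'.1) := by
      refine ⟨-M, ?_⟩
      rintro x ⟨π2', rfl⟩
      exact hFlb b hb.1 π2'.1 π2'.2
    have h2 : BddBelow (Set.range fun bb : {b : S → ℝ //
        b ∈ stdSimplex ℝ S ∧ A.mulVec b = χ} =>
        ⨅ π2' : {π2 : S → A2 → ℝ // ∀ s, π2 s ∈ stdSimplex ℝ A2}, F bb.1 π2'.1) := by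
      refine ⟨-M, ?_⟩
      rintro x ⟨bb, rfl⟩
      exact le_ciInf fun π2' => hFlb bb.1 bb.2.1 π2'.1 π2'.2
    calc Habs T R γ A W χ
        = ⨅ bb : {b : S → ℝ // b ∈ stdSimplex ℝ S ∧ A.mulVec b = χ},
            ⨅ π2' : {π2 : S → A2 → ℝ // ∀ s, π2 s ∈ stdSimplex ℝ A2}, F bb.1 π2'.1 :=
          hHabs χ
      _ ≤ ⨅ π2' : {π2 : S → A2 → ℝ // ∀ s, π2 s ∈ stdSimplex ℝ A2}, F b π2'.1 :=
          ciInf_le h2 ⟨b, hb⟩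
      _ ≤ F b π2 := ciInf_le h1 ⟨π2, hπ2⟩
  -- approximation from the infimum
  have happrox : ∀ (χ : Fin k → ℝ)
      (_ : Nonempty {b : S → ℝ // b ∈ stdSimplex ℝ S ∧ A.mulVec b = χ})
      (ε : ℝ), 0 < ε → ∃ (b : S → ℝ) (_ : b ∈ stdSimplex ℝ S ∧ A.mulVec b = χ)
      (π2 : S → A2 → ℝ) (_ : ∀ s, π2 s ∈ stdSimplex ℝ A2),
      F b π2 < Habs T R γ A W χ + ε := by
    intro χ hne ε hε
    haveI := hne
    have h1 : Habs T R γ A W χ <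
        (⨅ bb : {b : S → ℝ // b ∈ stdSimplex ℝ S ∧ A.mulVec b = χ},
          ⨅ π2' : {π2 : S → A2 → ℝ // ∀ s, π2 s ∈ stdSimplex ℝ A2}, F bb.1 π2'.1) + ε / 2 := by
      rw [← hHabs χ]; linarith
    obtain ⟨bb, hbb⟩ := exists_lt_of_ciInf_lt ((hHabs χ) ▸ h1 : (⨅ bb : {b : S → ℝ //
      b ∈ stdSimplex ℝ S ∧ A.mulVec b = χ}, ⨅ π2' : {π2 : S → A2 → ℝ //
      ∀ s, π2 s ∈ stdSimplex ℝ A2}, F bb.1 π2'.1) < Habs T R γ A W χ + ε / 2)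
    have h2 : (⨅ π2' : {π2 : S → A2 → ℝ // ∀ s, π2 s ∈ stdSimplex ℝ A2}, F bb.1 π2'.1) <
        Habs T R γ A W χ + ε / 2 := hbb
    obtain ⟨π2', hπ2'⟩ := exists_lt_of_ciInf_lt h2
    exact ⟨bb.1, bb.2, π2'.1, π2'.2, hπ2'.trans_le (by linarith)⟩
  -- main argument
  obtain ⟨b1, hb1mem, hb1eq⟩ := hχ1
  obtain ⟨b2, hb2mem, hb2eq⟩ := hχ2
  haveI ne1 : Nonempty {b : S → ℝ // b ∈ stdSimplex ℝ S ∧ A.mulVec b = χ1} :=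
    ⟨⟨b1, hb1mem, hb1eq⟩⟩
  haveI ne2 : Nonempty {b : S → ℝ // b ∈ stdSimplex ℝ S ∧ A.mulVec b = χ2} :=
    ⟨⟨b2, hb2mem, hb2eq⟩⟩
  refine real_le_of_forall_pos fun ε hε => ?_
  obtain ⟨b1', hb1', π21, hπ21, hF1⟩ := happrox χ1 ne1 ε hε
  obtain ⟨b2', hb2', π22, hπ22, hF2⟩ := happrox χ2 ne2 ε hε
  -- the mixed belief is feasible for the mixed characteristic vector
  have hbmixmem : mixBelief b1' b2' θ ∈ stdSimplex ℝ S := by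
    constructor
    · intro s
      exact add_nonneg (mul_nonneg hθ0 (hb1'.1.1 s)) (mul_nonneg hθ1' (hb2'.1.1 s))
    · show ∑ s, (θ * b1' s + (1 - θ) * b2' s) = 1
      rw [Finset.sum_add_distrib, ← Finset.mul_sum, ← Finset.mul_sum, hb1'.1.2, hb2'.1.2]
      ring
  have hbmixvec : A.mulVec (mixBelief b1' b2' θ) = θ • χ1 + (1 - θ) • χ2 := by
    have : mixBelief b1' b2' θ = θ • b1' + (1 - θ) • b2' := by
      funext s
      simp [mixBelief, Pi.add_apply, Pi.smul_apply, smul_eq_mul]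
    rw [this, Matrix.mulVec_add, Matrix.mulVec_smul, Matrix.mulVec_smul, hb1'.2, hb2'.2]
  have hmixpol : ∀ s, mixPolicy b1' b2' π21 π22 θ s ∈ stdSimplex ℝ A2 :=
    mixPolicy_mem hb1'.1.1 hb2'.1.1 hπ21 hπ22 hθ0 hθ1
  calc Habs T R γ A W (θ • χ1 + (1 - θ) • χ2)
      ≤ F (mixBelief b1' b2' θ) (mixPolicy b1' b2' π21 π22 θ) :=
        habs_le _ _ ⟨hbmixmem, hbmixvec⟩ _ hmixpol
    _ ≤ θ * F b1' π21 + (1 - θ) * F b2' π22 := by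
        refine ciSup_le fun π1 => ?_
        calc stageVal T R γ (fun b' => W (A.mulVec b')) (mixBelief b1' b2' θ) π1.1
              (mixPolicy b1' b2' π21 π22 θ)
            ≤ θ * stageVal T R γ (fun b' => W (A.mulVec b')) b1' π1.1 π21 +
              (1 - θ) * stageVal T R γ (fun b' => W (A.mulVec b')) b2' π1.1 π22 :=
              stageVal_mix A W hT hγ0 hWconv hb1'.1 hb2'.1 hπ21 hπ22 hθ0 hθ1 π1.2
          _ ≤ θ * F b1' π21 + (1 - θ) * F b2' π22 :=
              add_le_add
                (mul_le_mul_of_nonneg_left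
                  (le_ciSup (hFbddAbove b1' hb1'.1 π21 hπ21) π1) hθ0)
                (mul_le_mul_of_nonneg_left
                  (le_ciSup (hFbddAbove b2' hb2'.1 π22 hπ22) π1) hθ1')
    _ ≤ θ * (Habs T R γ A W χ1 + ε) + (1 - θ) * (Habs T R γ A W χ2 + ε) :=
        add_le_add (mul_le_mul_of_nonneg_left hF1.le hθ0)
          (mul_le_mul_of_nonneg_left hF2.le hθ1')
    _ = θ * Habs T R γ A W χ1 + (1 - θ) * Habs T R γ A W χ2 + ε := by ring
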